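/- Let H be a group with finite symmetric generating set S whose word metric is δ-hyperbolic. There exists a constant C ≥ 0, depending only on H, S and δ, such that for every h ∈ H the following holds: if u, c ∈ H are such that h = c⁻¹uc, u is a conjugacy minimal element of the conjugacy class of h, and |c| is minimal among word lengths of all elements conjugating h to some conjugacy minimal element of its conjugacy class, then the concatenation of discrete geodesics from c to 1, from 1 to u, and from u to uc is a (1,C)-quasigeodesic in the word metric. -/

import Mathlib

open Set

/-- The word length of `h` with respect to the generating set `S`: the least `n` such
that `h` is a product of `n` elements of `S`. -/
noncomputable def wordLength {H : Type*} [Group H] (S : Set H) (h : H) : ℕ :=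
  sInf {n | ∃ l : List H, l.length = n ∧ (∀ x ∈ l, x ∈ S) ∧ l.prod = h}

/-- The word metric: `d(a,b) = |a⁻¹ b|`. -/
noncomputable def wordDist {H : Type*} [Group H] (S : Set H) (a b : H) : ℕ :=
  wordLength S (a⁻¹ * b)

/-- `g : {0,…,n} → H` is a discrete geodesic (of length `n`) in the word metric:
`d(g i, g j) = |i − j|` for all `i, j ≤ n`. -/
def IsDiscreteGeodesic {H : Type*} [Group H] (S : Set H) (g : ℕ → H) (n : ℕ) : Prop :=
  ∀ i j : ℕ, i ≤ j → j ≤ n → wordDist S (g i) (g j) = j - i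

/-- The Gromov product `(x,y)_z = ½(d(x,z) + d(y,z) − d(x,y))` in the word metric. -/
noncomputable def gromovProd {H : Type*} [Group H] (S : Set H) (x y z : H) : ℝ :=
  ((wordDist S x z : ℝ) + (wordDist S y z : ℝ) - (wordDist S x y : ℝ)) / 2

/-- The word metric of `(H,S)` is `δ`-hyperbolic: geodesic triangles in the Cayley graph
are `δ`-thin, i.e. for any `x, y, z`, any discrete geodesics `f` from `z` to `x` and `g`
from `z` to `y`, and any `i` with `i ≤ (x,y)_z`, one has `d(f i, g i) ≤ δ`. -/
def WordHyperbolic {H : Type*} [Group H] (S : Set H) (δ : ℝ) : Prop :=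
  ∀ (x y z : H) (f g : ℕ → H),
    f 0 = z → f (wordDist S z x) = x → IsDiscreteGeodesic S f (wordDist S z x) →
    g 0 = z → g (wordDist S z y) = y → IsDiscreteGeodesic S g (wordDist S z y) →
    ∀ i : ℕ, i ≤ wordDist S z x → i ≤ wordDist S z y →
      (i : ℝ) ≤ gromovProd S x y z →
      (wordDist S (f i) (g i) : ℝ) ≤ δ

/-- `h` is `κ`-almost conjugacy minimal: `|h| ≤ |h'| + κ` for every conjugate `h'` of
`h` in `H`. -/
def AlmostConjMin {H : Type*} [Group H] (S : Set H) (κ : ℝ) (h : H) : Prop :=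
  ∀ g : H, (wordLength S h : ℝ) ≤ (wordLength S (g⁻¹ * h * g) : ℝ) + κ

/-- `h` is conjugacy minimal: `|h| ≤ |h'|` for every conjugate `h'` of `h` in `H`. -/
def ConjMin {H : Type*} [Group H] (S : Set H) (h : H) : Prop :=
  ∀ g : H, wordLength S h ≤ wordLength S (g⁻¹ * h * g)

section AuxLemmas

variable {H : Type*} [Group H] {S : Set H}

lemma wl_le {h : H} {l : List H} (hl : ∀ x ∈ l, x ∈ S) (hp : l.prod = h) :
    wordLength S h ≤ l.length := Nat.sInf_le ⟨l, rfl, hl, hp⟩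

lemma exists_wl_list (hSsym : ∀ s ∈ S, s⁻¹ ∈ S) (hSgen : Subgroup.closure S = ⊤) (h : H) :
    ∃ l : List H, l.length = wordLength S h ∧ (∀ x ∈ l, x ∈ S) ∧ l.prod = h := by
  have hx : h ∈ Submonoid.closure (S ∪ S⁻¹) := by
    rw [← Subgroup.closure_toSubmonoid, hSgen]
    exact Subgroup.mem_top h
  obtain ⟨l, hl, hp⟩ := Submonoid.exists_list_of_mem_closure hx
  have hl' : ∀ x ∈ l, x ∈ S := by
    intro x hx'
    rcases hl x hx' with h1 | h1
    · exact h1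
    · have := hSsym x⁻¹ h1; rwa [inv_inv] at this
  have : wordLength S h ∈ {n | ∃ l : List H, l.length = n ∧ (∀ x ∈ l, x ∈ S) ∧ l.prod = h} :=
    Nat.sInf_mem ⟨l.length, l, rfl, hl', hp⟩
  obtain ⟨l', h1, h2, h3⟩ := this
  exact ⟨l', h1, h2, h3⟩

lemma wl_one : wordLength S (1 : H) = 0 :=
  Nat.le_zero.mp (wl_le (l := []) (by simp) rfl)

lemma wl_mul_le (hSsym : ∀ s ∈ S, s⁻¹ ∈ S) (hSgen : Subgroup.closure S = ⊤) (a b : H) :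
    wordLength S (a * b) ≤ wordLength S a + wordLength S b := by
  obtain ⟨la, hla, hma, hpa⟩ := exists_wl_list hSsym hSgen a
  obtain ⟨lb, hlb, hmb, hpb⟩ := exists_wl_list hSsym hSgen b
  have := wl_le (l := la ++ lb) (by
    intro x hx; rcases List.mem_append.mp hx with h | h
    exacts [hma x h, hmb x h]) (by rw [List.prod_append, hpa, hpb])
  simpa [hla, hlb] using this

lemma wl_inv (hSsym : ∀ s ∈ S, s⁻¹ ∈ S) (hSgen : Subgroup.closure S = ⊤) (a : H) :
    wordLength S a⁻¹ = wordLength S a := by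
  have key : ∀ b : H, wordLength S b⁻¹ ≤ wordLength S b := by
    intro b
    obtain ⟨l, hl, hm, hp⟩ := exists_wl_list hSsym hSgen b
    have := wl_le (l := (l.map fun x => x⁻¹).reverse) (by
      intro x hx
      simp only [List.mem_reverse, List.mem_map] at hx
      obtain ⟨y, hy, rfl⟩ := hx
      exact hSsym y (hm y hy)) (by rw [← List.prod_inv_reverse, hp])
    simpa [hl] using this
  exact le_antisymm (by simpa using key a) (by simpa using key a⁻¹)

lemma d_symm (hSsym : ∀ s ∈ S, s⁻¹ ∈ S) (hSgen : Subgroup.closure S = ⊤) (a b : H) :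
    wordDist S a b = wordDist S b a := by
  unfold wordDist
  rw [← wl_inv hSsym hSgen (a⁻¹ * b)]
  simp [mul_inv_rev]

lemma d_triangle (hSsym : ∀ s ∈ S, s⁻¹ ∈ S) (hSgen : Subgroup.closure S = ⊤) (a b c : H) :
    wordDist S a c ≤ wordDist S a b + wordDist S b c := by
  have := wl_mul_le hSsym hSgen (a⁻¹ * b) (b⁻¹ * c)
  unfold wordDist
  simpa [mul_assoc] using this

lemma d_one_left (a : H) : wordDist S 1 a = wordLength S a := by simp [wordDist]

lemma d_mul_left (x a b : H) : wordDist S (x * a) (x * b) = wordDist S a b := by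
  simp [wordDist, mul_assoc]

end AuxLemmas

section Geodesics

variable {H : Type*} [Group H] {S : Set H}

lemma exists_geodesic (hSsym : ∀ s ∈ S, s⁻¹ ∈ S) (hSgen : Subgroup.closure S = ⊤) (a b : H) :
    ∃ g : ℕ → H, g 0 = a ∧ g (wordDist S a b) = b ∧ IsDiscreteGeodesic S g (wordDist S a b) := by
  obtain ⟨l, hlen, hmem, hprod⟩ := exists_wl_list hSsym hSgen (a⁻¹ * b)
  have hlen' : wordDist S a b = l.length := hlen.symm
  refine ⟨fun i => a * (l.take i).prod, by simp, ?_, ?_⟩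
  · rw [hlen']
    show a * (List.take l.length l).prod = b
    rw [List.take_length, hprod, mul_inv_cancel_left]
  · have key : ∀ i j : ℕ, i ≤ j → j ≤ l.length →
        wordDist S (a * (l.take i).prod) (a * (l.take j).prod) ≤ j - i := by
      intro i j hij hj
      rw [d_mul_left]
      have hsplit : (l.take j).take i ++ (l.take j).drop i = l.take j := List.take_append_drop _ _
      have htt : (l.take j).take i = l.take i := by
        rw [List.take_take, Nat.min_eq_left hij]
      have hpe : (l.take i).prod * ((l.take j).drop i).prod = (l.take j).prod := by
        rw [htt] at hsplit
        conv_rhs => rw [← hsplit]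
        rw [List.prod_append]
      have hinv : (l.take i).prod⁻¹ * (l.take j).prod = ((l.take j).drop i).prod := by
        rw [← hpe, inv_mul_cancel_left]
      have hlen2 : ((l.take j).drop i).length = j - i := by
        simp [List.length_drop, List.length_take, Nat.min_eq_left hj]
      have := wl_le (l := (l.take j).drop i) (by
        intro x hx
        exact hmem x (List.take_subset _ _ (List.drop_subset _ _ hx))) rfl
      unfold wordDist
      rw [hinv]
      omega
    rw [hlen']
    intro i j hij hj
    have h1 : wordDist S (a * (l.take 0).prod) (a * (l.take i).prod) ≤ i := by
      simpa using key 0 i (Nat.zero_le _) (le_trans hij hj)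
    have h2 := key i j hij hj
    have h3 : wordDist S (a * (l.take j).prod) (a * (l.take l.length).prod) ≤ l.length - j :=
      key j l.length hj le_rfl
    have hfull : wordDist S (a * (l.take 0).prod) (a * (l.take l.length).prod) = l.length := by
      simp only [List.take_length, hprod, List.take_zero, List.prod_nil, mul_one,
        mul_inv_cancel_left]
      exact hlen'
    have t1 := d_triangle hSsym hSgen (a * (l.take 0).prod) (a * (l.take i).prod)
      (a * (l.take l.length).prod)
    have t2 := d_triangle hSsym hSgen (a * (l.take i).prod) (a * (l.take j).prod)
      (a * (l.take l.length).prod)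
    show wordDist S (a * (l.take i).prod) (a * (l.take j).prod) = j - i
    omega

lemma geo_rev (hSsym : ∀ s ∈ S, s⁻¹ ∈ S) (hSgen : Subgroup.closure S = ⊤) {g : ℕ → H} {n : ℕ}
    (hg : IsDiscreteGeodesic S g n) : IsDiscreteGeodesic S (fun i => g (n - i)) n := by
  intro i j hij hj
  have := hg (n - j) (n - i) (by omega) (by omega)
  rw [d_symm hSsym hSgen] at this
  simp only []
  omega

lemma geo_mul {g : ℕ → H} {n : ℕ} (x : H) (hg : IsDiscreteGeodesic S g n) :
    IsDiscreteGeodesic S (fun i => x * g i) n := by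
  intro i j hij hj
  rw [d_mul_left]
  exact hg i j hij hj

lemma gp_nonneg (hSsym : ∀ s ∈ S, s⁻¹ ∈ S) (hSgen : Subgroup.closure S = ⊤) (x y z : H) :
    0 ≤ gromovProd S x y z := by
  have h := d_triangle hSsym hSgen x z y
  have h2 : wordDist S z y = wordDist S y z := d_symm hSsym hSgen z y
  unfold gromovProd
  have : (wordDist S x y : ℝ) ≤ (wordDist S x z : ℝ) + (wordDist S y z : ℝ) := by
    rw [← h2]; exact_mod_cast h
  linarith

lemma gp_le_left (hSsym : ∀ s ∈ S, s⁻¹ ∈ S) (hSgen : Subgroup.closure S = ⊤) (x y z : H) :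
    gromovProd S x y z ≤ (wordDist S z x : ℝ) := by
  have h : wordDist S y z ≤ wordDist S y x + wordDist S x z := d_triangle hSsym hSgen y x z
  have h2 : wordDist S y x = wordDist S x y := d_symm hSsym hSgen y x
  have h3 : wordDist S z x = wordDist S x z := d_symm hSsym hSgen z x
  unfold gromovProd
  rw [h2] at h
  have : (wordDist S y z : ℝ) ≤ (wordDist S x y : ℝ) + (wordDist S x z : ℝ) := by exact_mod_cast h
  rw [h3]
  linarith

lemma gp_le_right (hSsym : ∀ s ∈ S, s⁻¹ ∈ S) (hSgen : Subgroup.closure S = ⊤) (x y z : H) :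
    gromovProd S x y z ≤ (wordDist S z y : ℝ) := by
  have h : wordDist S x z ≤ wordDist S x y + wordDist S y z := d_triangle hSsym hSgen x y z
  have h3 : wordDist S z y = wordDist S y z := d_symm hSsym hSgen z y
  unfold gromovProd
  have : (wordDist S x z : ℝ) ≤ (wordDist S x y : ℝ) + (wordDist S y z : ℝ) := by exact_mod_cast h
  rw [h3]
  linarith

end Geodesics

section Hyp

variable {H : Type*} [Group H] {S : Set H} {δ : ℝ}

lemma lem4pt (hSsym : ∀ s ∈ S, s⁻¹ ∈ S) (hSgen : Subgroup.closure S = ⊤) (hδ : 0 ≤ δ)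
    (hhyp : WordHyperbolic S δ) (x y z w : H) :
    min (gromovProd S x z w) (gromovProd S z y w) ≤ gromovProd S x y w + (δ + 1) := by
  set t := min (gromovProd S x z w) (gromovProd S z y w) with ht
  rcases le_or_gt t (δ + 1) with hcase | hcase
  · have := gp_nonneg hSsym hSgen x y w
    linarith
  · have ht0 : (0:ℝ) ≤ t := by linarith
    set i := ⌊t⌋₊ with hi
    have hi_le : (i : ℝ) ≤ t := Nat.floor_le ht0
    have hi_gt : t < i + 1 := Nat.lt_floor_add_one t
    obtain ⟨f, hf0, hfn, hfg⟩ := exists_geodesic hSsym hSgen w x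
    obtain ⟨g, hg0, hgn, hgg⟩ := exists_geodesic hSsym hSgen w z
    obtain ⟨k, hk0, hkn, hkg⟩ := exists_geodesic hSsym hSgen w y
    have hxz : (i : ℝ) ≤ gromovProd S x z w := le_trans hi_le (min_le_left _ _)
    have hzy : (i : ℝ) ≤ gromovProd S z y w := le_trans hi_le (min_le_right _ _)
    have hiwx : i ≤ wordDist S w x := by
      have := le_trans hxz (gp_le_left hSsym hSgen x z w); exact_mod_cast this
    have hiwz : i ≤ wordDist S w z := by
      have := le_trans hxz (gp_le_right hSsym hSgen x z w); exact_mod_cast this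
    have hiwy : i ≤ wordDist S w y := by
      have := le_trans hzy (gp_le_right hSsym hSgen z y w); exact_mod_cast this
    have thin1 := hhyp x z w f g hf0 hfn hfg hg0 hgn hgg i hiwx hiwz hxz
    have thin2 := hhyp z y w g k hg0 hgn hgg hk0 hkn hkg i hiwz hiwy hzy
    have dfx : wordDist S (f i) x = wordDist S w x - i := by
      have := hfg i (wordDist S w x) hiwx le_rfl
      rwa [hfn] at this
    have dky : wordDist S (k i) y = wordDist S w y - i := by
      have := hkg i (wordDist S w y) hiwy le_rfl
      rwa [hkn] at this
    have tri : wordDist S x y ≤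
        wordDist S x (f i) + (wordDist S (f i) (g i) + wordDist S (g i) (k i)) + wordDist S (k i) y := by
      have t1 := d_triangle hSsym hSgen x (f i) (k i)
      have t2 := d_triangle hSsym hSgen (f i) (g i) (k i)
      have t3 := d_triangle hSsym hSgen x (k i) y
      omega
    have hsx : wordDist S x (f i) = wordDist S (f i) x := d_symm hSsym hSgen _ _
    have hcast : (wordDist S x y : ℝ) ≤
        ((wordDist S w x : ℝ) - i) + 2 * δ + ((wordDist S w y : ℝ) - i) := by
      have e1 : ((wordDist S w x - i : ℕ) : ℝ) = (wordDist S w x : ℝ) - i := by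
        rw [Nat.cast_sub hiwx]
      have e2 : ((wordDist S w y - i : ℕ) : ℝ) = (wordDist S w y : ℝ) - i := by
        rw [Nat.cast_sub hiwy]
      have tri' : (wordDist S x y : ℝ) ≤ ((wordDist S w x - i : ℕ) : ℝ) +
          ((wordDist S (f i) (g i) : ℝ) + (wordDist S (g i) (k i) : ℝ)) +
          ((wordDist S w y - i : ℕ) : ℝ) := by
        rw [hsx, dfx] at tri
        rw [dky] at tri
        exact_mod_cast tri
      rw [e1, e2] at tri'
      linarith
    have hgxw : wordDist S x w = wordDist S w x := d_symm hSsym hSgen _ _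
    have hgyw : wordDist S y w = wordDist S w y := d_symm hSsym hSgen _ _
    unfold gromovProd
    rw [hgxw, hgyw]
    have : (i : ℝ) - δ ≤ ((wordDist S w x : ℝ) + (wordDist S w y : ℝ) - (wordDist S x y : ℝ)) / 2 := by
      linarith
    linarith

end Hyp

section Conj

variable {H : Type*} [Group H] {S : Set H} {δ : ℝ}

lemma min_step {u c : H}
    (hmin : ∀ c' u' : H, c⁻¹ * u * c = c'⁻¹ * u' * c' → ConjMin S u' →
      wordLength S c ≤ wordLength S c')
    (x m u₂ : H) (hcm : ConjMin S u₂) (heq : x⁻¹ * u * x = m⁻¹ * u₂ * m) :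
    wordLength S c ≤ wordLength S (m * (x⁻¹ * c)) := by
  apply hmin _ _ ?_ hcm
  have hu : u = x * (m⁻¹ * u₂ * m) * x⁻¹ := by rw [← heq]; group
  rw [hu]; group

lemma conjmin_of_le {u v x : H} (hu : ConjMin S u) (hlen : wordLength S v ≤ wordLength S u)
    (hv : v = x⁻¹ * u * x) : ConjMin S v := by
  intro g
  have h1 : g⁻¹ * v * g = (x * g)⁻¹ * u * (x * g) := by rw [hv]; group
  rw [h1]
  exact le_trans hlen (hu (x * g))

lemma conjMin_inv (hSsym : ∀ s ∈ S, s⁻¹ ∈ S) (hSgen : Subgroup.closure S = ⊤) {u : H}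
    (hu : ConjMin S u) : ConjMin S u⁻¹ := by
  intro g
  have h1 : g⁻¹ * u⁻¹ * g = (g⁻¹ * u * g)⁻¹ := by group
  calc wordLength S u⁻¹ = wordLength S u := wl_inv hSsym hSgen u
    _ ≤ wordLength S (g⁻¹ * u * g) := hu g
    _ = wordLength S (g⁻¹ * u * g)⁻¹ := (wl_inv hSsym hSgen _).symm
    _ = wordLength S (g⁻¹ * u⁻¹ * g) := by rw [h1]

/-- The key lemma: the Gromov product `(c,u)_1` is at most `δ + 1`. -/
lemma lemA (hSsym : ∀ s ∈ S, s⁻¹ ∈ S) (hSgen : Subgroup.closure S = ⊤) (hδ : 0 ≤ δ)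
    (hhyp : WordHyperbolic S δ) {u c : H} (hu : ConjMin S u)
    (hmin : ∀ c' u' : H, c⁻¹ * u * c = c'⁻¹ * u' * c' → ConjMin S u' →
      wordLength S c ≤ wordLength S c') :
    gromovProd S c u 1 ≤ δ + 1 := by
  by_contra hcon
  push_neg at hcon
  have hgp0 : (0:ℝ) ≤ gromovProd S c u 1 := gp_nonneg hSsym hSgen c u 1
  set i := ⌊gromovProd S c u 1⌋₊ with hidef
  have hi_le : (i : ℝ) ≤ gromovProd S c u 1 := Nat.floor_le hgp0
  have hi_gt : gromovProd S c u 1 < i + 1 := Nat.lt_floor_add_one _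
  have hiδ : δ < (i : ℝ) := by linarith
  obtain ⟨f, hf0, hfn, hfg⟩ := exists_geodesic hSsym hSgen 1 c
  obtain ⟨μ, hμ0, hμn, hμg⟩ := exists_geodesic hSsym hSgen 1 u
  have hic : i ≤ wordDist S 1 c := by
    have := le_trans hi_le (gp_le_left hSsym hSgen c u 1); exact_mod_cast this
  have hiu : i ≤ wordDist S 1 u := by
    have := le_trans hi_le (gp_le_right hSsym hSgen c u 1); exact_mod_cast this
  have thin := hhyp c u 1 f μ hf0 hfn hfg hμ0 hμn hμg i hic hiu hi_le
  set x := μ i with hxdef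
  have h1x : wordDist S 1 x = i := by
    have := hμg 0 i (Nat.zero_le _) hiu
    rw [hμ0] at this
    simpa using this
  have hwlx : wordLength S x = i := by rw [← d_one_left]; exact h1x
  have hxu : wordDist S x u = wordDist S 1 u - i := by
    have := hμg i (wordDist S 1 u) hiu le_rfl
    rwa [hμn] at this
  have hwlu : wordLength S u = wordDist S 1 u := (d_one_left u).symm
  have hconj_le : wordLength S (x⁻¹ * u * x) ≤ wordLength S u := by
    have t1 : wordLength S (x⁻¹ * u * x) ≤ wordLength S (x⁻¹ * u) + wordLength S x :=
      wl_mul_le hSsym hSgen _ _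
    have t2 : wordLength S (x⁻¹ * u) = wordDist S x u := rfl
    omega
  have hcm : ConjMin S (x⁻¹ * u * x) := conjmin_of_le hu hconj_le rfl
  have hstep := min_step hmin x 1 (x⁻¹ * u * x) hcm (by group)
  rw [one_mul] at hstep
  have hxc : wordLength S (x⁻¹ * c) = wordDist S x c := rfl
  have htri : wordDist S x c ≤ wordDist S x (f i) + wordDist S (f i) c :=
    d_triangle hSsym hSgen _ _ _
  have hfc : wordDist S (f i) c = wordDist S 1 c - i := by
    have := hfg i (wordDist S 1 c) hic le_rfl
    rwa [hfn] at this
  have hsymfx : wordDist S x (f i) = wordDist S (f i) x := d_symm hSsym hSgen _ _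
  have hwlc : wordLength S c = wordDist S 1 c := (d_one_left c).symm
  -- combine: wl c ≤ wl (x⁻¹ c) = d x c ≤ δ + (d 1 c - i)
  have hreal : (wordDist S 1 c : ℝ) ≤ δ + ((wordDist S 1 c : ℝ) - i) := by
    have e1 : ((wordDist S 1 c - i : ℕ) : ℝ) = (wordDist S 1 c : ℝ) - i := by
      rw [Nat.cast_sub hic]
    have c1 : (wordDist S 1 c : ℝ) ≤ (wordDist S x c : ℝ) := by
      rw [← hwlc] at *
      exact_mod_cast le_trans hstep (le_of_eq hxc)
    have c2 : (wordDist S x c : ℝ) ≤ (wordDist S (f i) x : ℝ) + ((wordDist S 1 c - i : ℕ) : ℝ) := by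
      rw [← hsymfx, ← hfc]
      exact_mod_cast htri
    have c3 : (wordDist S (f i) x : ℝ) ≤ δ := by rw [hxdef]; exact thin
    rw [e1] at c2
    linarith
  linarith

end Conj

section Ball

variable {H : Type*} [Group H] {S : Set H}

lemma exists_min_conj (v : H) : ∃ m u₂ : H, ConjMin S u₂ ∧ v = m⁻¹ * u₂ * m := by
  have hne : (Set.range fun g : H => wordLength S (g⁻¹ * v * g)).Nonempty := ⟨_, 1, rfl⟩
  have hmem := Nat.sInf_mem hne
  obtain ⟨g₀, hg₀⟩ := hmem
  refine ⟨g₀⁻¹, g₀⁻¹ * v * g₀, ?_, by group⟩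
  intro g
  have h1 : g⁻¹ * (g₀⁻¹ * v * g₀) * g = (g₀ * g)⁻¹ * v * (g₀ * g) := by group
  have hg₀' : wordLength S (g₀⁻¹ * v * g₀) = sInf (Set.range fun g : H => wordLength S (g⁻¹ * v * g)) := hg₀
  rw [hg₀', h1]
  exact Nat.sInf_le ⟨g₀ * g, rfl⟩

lemma ball_finite (hSfin : S.Finite) (hSsym : ∀ s ∈ S, s⁻¹ ∈ S)
    (hSgen : Subgroup.closure S = ⊤) (n : ℕ) : {v : H | wordLength S v ≤ n}.Finite := by
  induction n with
  | zero =>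
    apply Set.Finite.subset (Set.finite_singleton (1 : H))
    intro v hv
    simp only [Set.mem_setOf_eq, Nat.le_zero] at hv
    obtain ⟨l, hl, _, hp⟩ := exists_wl_list hSsym hSgen v
    rw [hv] at hl
    rw [List.length_eq_zero_iff] at hl
    simp [hl] at hp
    simp [← hp]
  | succ n ih =>
    apply Set.Finite.subset (Set.Finite.union ih (Set.Finite.image2 (· * ·) ih hSfin))
    intro v hv
    simp only [Set.mem_setOf_eq] at hv
    obtain ⟨l, hl, hm, hp⟩ := exists_wl_list hSsym hSgen v
    rcases Nat.lt_or_ge (wordLength S v) (n + 1) with h | h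
    · left; simp only [Set.mem_setOf_eq]; omega
    · have hlen : l.length = n + 1 := by omega
      have hlne : l ≠ [] := by intro h'; rw [h'] at hlen; simp at hlen
      right
      have hsplit : l.dropLast ++ [l.getLast hlne] = l := List.dropLast_append_getLast hlne
      refine ⟨l.dropLast.prod, ?_, l.getLast hlne, ?_, ?_⟩
      · simp only [Set.mem_setOf_eq]
        have := wl_le (l := l.dropLast) (fun x hx => hm x (List.dropLast_subset l hx)) rfl
        have : wordLength S l.dropLast.prod ≤ l.dropLast.length := this
        rw [List.length_dropLast, hlen] at this
        omega
      · exact hm _ (List.getLast_mem hlne)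
      · rw [← hp]
        conv_rhs => rw [← hsplit]
        rw [List.prod_append, List.prod_cons, List.prod_nil, mul_one]

lemma exists_M (hSfin : S.Finite) (hSsym : ∀ s ∈ S, s⁻¹ ∈ S)
    (hSgen : Subgroup.closure S = ⊤) (Bn : ℕ) :
    ∃ M : ℕ, ∀ v : H, wordLength S v ≤ Bn →
      ∃ m u₂ : H, ConjMin S u₂ ∧ v = m⁻¹ * u₂ * m ∧ wordLength S m ≤ M := by
  classical
  set F : H → ℕ := fun v => wordLength S (exists_min_conj (S := S) v).choose with hF
  have hball := ball_finite hSfin hSsym hSgen (H := H) Bn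
  have himg : (F '' {v : H | wordLength S v ≤ Bn}).Finite := hball.image F
  obtain ⟨M, hM⟩ := himg.bddAbove
  refine ⟨M, fun v hv => ?_⟩
  obtain ⟨u₂, hcm, hveq⟩ := (exists_min_conj (S := S) v).choose_spec
  exact ⟨_, u₂, hcm, hveq, hM ⟨v, hv, rfl⟩⟩

end Ball

section SmallU

variable {H : Type*} [Group H] {S : Set H} {δ : ℝ}

lemma lemC (hSsym : ∀ s ∈ S, s⁻¹ ∈ S) (hSgen : Subgroup.closure S = ⊤) (hδ : 0 ≤ δ)
    (hhyp : WordHyperbolic S δ) {u c : H} (hu : ConjMin S u)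
    (hmin : ∀ c' u' : H, c⁻¹ * u * c = c'⁻¹ * u' * c' → ConjMin S u' →
      wordLength S c ≤ wordLength S c')
    (Bn M : ℕ)
    (hM : ∀ v : H, wordLength S v ≤ Bn →
      ∃ m u₂ : H, ConjMin S u₂ ∧ v = m⁻¹ * u₂ * m ∧ wordLength S m ≤ M)
    (hBn : (wordLength S u : ℝ) + 2 * δ ≤ (Bn : ℝ)) :
    gromovProd S c (u * c) 1 ≤ (M : ℝ) + (wordLength S u : ℝ) + 2 * δ + 1 := by
  have hwlu : wordLength S u = wordDist S 1 u := (d_one_left u).symm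
  have hwlc : wordLength S c = wordDist S 1 c := (d_one_left c).symm
  have claim : ∀ i : ℕ, (i : ℝ) ≤ gromovProd S c (u * c) 1 →
      (i : ℝ) ≤ max (2 * δ) ((M : ℝ) + (wordLength S u : ℝ)) := by
    intro i hiP
    obtain ⟨γ, hγ0, hγn, hγg⟩ := exists_geodesic hSsym hSgen 1 c
    obtain ⟨η, hη0, hηn, hηg⟩ := exists_geodesic hSsym hSgen 1 (u * c)
    have hic : i ≤ wordDist S 1 c := by
      have := le_trans hiP (gp_le_left hSsym hSgen c (u * c) 1); exact_mod_cast this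
    have hiuc : i ≤ wordDist S 1 (u * c) := by
      have := le_trans hiP (gp_le_right hSsym hSgen c (u * c) 1); exact_mod_cast this
    have thin1 := hhyp c (u * c) 1 γ η hγ0 hγn hγg hη0 hηn hηg i hic hiuc hiP
    by_cases hbr : (i : ℝ) ≤ gromovProd S u (u * c) 1
    · -- branch A : close to the geodesic [1,u]
      obtain ⟨μ, hμ0, hμn, hμg⟩ := exists_geodesic hSsym hSgen 1 u
      have hiu : i ≤ wordDist S 1 u := by
        have := le_trans hbr (gp_le_left hSsym hSgen u (u * c) 1); exact_mod_cast this
      have thin2 := hhyp u (u * c) 1 μ η hμ0 hμn hμg hη0 hηn hηg i hiu hiuc hbr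
      have h1x : wordDist S 1 (μ i) = i := by
        have := hμg 0 i (Nat.zero_le _) hiu
        rw [hμ0] at this; simpa using this
      have hwlx : wordLength S (μ i) = i := by rw [← d_one_left]; exact h1x
      have hxu : wordDist S (μ i) u = wordDist S 1 u - i := by
        have := hμg i (wordDist S 1 u) hiu le_rfl
        rwa [hμn] at this
      have hconj_le : wordLength S ((μ i)⁻¹ * u * (μ i)) ≤ wordLength S u := by
        have t1 : wordLength S ((μ i)⁻¹ * u * (μ i)) ≤
            wordLength S ((μ i)⁻¹ * u) + wordLength S (μ i) := wl_mul_le hSsym hSgen _ _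
        have t2 : wordLength S ((μ i)⁻¹ * u) = wordDist S (μ i) u := rfl
        omega
      have hcm : ConjMin S ((μ i)⁻¹ * u * (μ i)) := conjmin_of_le hu hconj_le rfl
      have hstep := min_step hmin (μ i) 1 ((μ i)⁻¹ * u * (μ i)) hcm (by group)
      rw [one_mul] at hstep
      have htri : wordDist S (μ i) c ≤ wordDist S (μ i) (η i) +
          (wordDist S (η i) (γ i) + wordDist S (γ i) c) := by
        have t1 := d_triangle hSsym hSgen (μ i) (η i) c
        have t2 := d_triangle hSsym hSgen (η i) (γ i) c
        omega
      have hγic : wordDist S (γ i) c = wordDist S 1 c - i := by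
        have := hγg i (wordDist S 1 c) hic le_rfl
        rwa [hγn] at this
      have hsym12 : wordDist S (η i) (γ i) = wordDist S (γ i) (η i) := d_symm hSsym hSgen _ _
      have hxc : wordLength S ((μ i)⁻¹ * c) = wordDist S (μ i) c := rfl
      have hreal : (wordDist S 1 c : ℝ) ≤ δ + δ + ((wordDist S 1 c : ℝ) - i) := by
        have e1 : ((wordDist S 1 c - i : ℕ) : ℝ) = (wordDist S 1 c : ℝ) - i := by
          rw [Nat.cast_sub hic]
        have c1 : (wordDist S 1 c : ℝ) ≤ (wordDist S (μ i) c : ℝ) := by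
          have : wordLength S c ≤ wordDist S (μ i) c := le_trans hstep (le_of_eq hxc)
          rw [hwlc] at this; exact_mod_cast this
        have c2 : (wordDist S (μ i) c : ℝ) ≤ (wordDist S (μ i) (η i) : ℝ) +
            ((wordDist S (γ i) (η i) : ℝ) + ((wordDist S 1 c - i : ℕ) : ℝ)) := by
          rw [← hγic, ← hsym12]
          exact_mod_cast htri
        rw [e1] at c2
        linarith
      have : (i : ℝ) ≤ 2 * δ := by linarith
      exact le_trans this (le_max_left _ _)
    · -- branch B : close to the geodesic [u, uc]
      push_neg at hbr
      have s1 : wordDist S (u * c) 1 = wordDist S 1 (u * c) := d_symm hSsym hSgen _ _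
      have s2 : wordDist S (u * c) u = wordDist S 1 c := by
        have e : (u * c)⁻¹ * u = c⁻¹ := by group
        show wordLength S ((u * c)⁻¹ * u) = wordLength S (1⁻¹ * c)
        rw [e, wl_inv hSsym hSgen]
        simp
      have s3 : wordDist S u (u * c) = wordDist S 1 c := by
        have e : u⁻¹ * (u * c) = c := by group
        show wordLength S (u⁻¹ * (u * c)) = wordLength S (1⁻¹ * c)
        rw [e]; simp
      have s4 : wordDist S u 1 = wordDist S 1 u := d_symm hSsym hSgen _ _
      have huc_le : wordDist S 1 (u * c) ≤ wordLength S u + wordDist S 1 c := by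
        have := wl_mul_le hSsym hSgen u c
        rw [hwlc] at this
        simpa [wordDist] using this
      have hc_le : wordDist S 1 c ≤ wordLength S u + wordDist S 1 (u * c) := by
        have e : u⁻¹ * (u * c) = c := by group
        have := wl_mul_le hSsym hSgen u⁻¹ (u * c)
        rw [e, wl_inv hSsym hSgen] at this
        have e2 : wordLength S (u * c) = wordDist S 1 (u * c) := (d_one_left _).symm
        rw [e2] at this
        omega
      -- unfold the Gromov products as real inequalities
      have hbr' : ((wordDist S 1 u : ℝ) + (wordDist S 1 (u * c) : ℝ)
          - (wordDist S 1 c : ℝ)) / 2 < i := by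
        unfold gromovProd at hbr
        rw [s4, s1, s3] at hbr
        exact hbr
      have ekr : ((wordDist S 1 (u * c) - i : ℕ) : ℝ) = (wordDist S 1 (u * c) : ℝ) - i :=
        Nat.cast_sub hiuc
      have hkcR : ((wordDist S 1 (u * c) - i : ℕ) : ℝ) ≤ (wordDist S 1 c : ℝ) := by
        have h2 : (wordDist S 1 (u * c) : ℝ) ≤ (wordDist S 1 u : ℝ) + (wordDist S 1 c : ℝ) := by
          rw [← hwlu] at *
          exact_mod_cast huc_le
        rw [ekr]; linarith
      have hkc : wordDist S 1 (u * c) - i ≤ wordDist S 1 c := by exact_mod_cast hkcR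
      have hk3 : ((wordDist S 1 (u * c) - i : ℕ) : ℝ) ≤ gromovProd S 1 u (u * c) := by
        unfold gromovProd
        have sA : wordDist S 1 (u * c) = wordDist S 1 (u * c) := rfl
        rw [s3]
        rw [ekr]
        linarith [hbr']
      have hη'0 : (fun t => η (wordDist S 1 (u * c) - t)) 0 = u * c := by
        show η (wordDist S 1 (u * c) - 0) = u * c
        rw [Nat.sub_zero, hηn]
      have hη'n : (fun t => η (wordDist S 1 (u * c) - t)) (wordDist S (u * c) 1) = 1 := by
        show η (wordDist S 1 (u * c) - wordDist S (u * c) 1) = 1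
        rw [s1, Nat.sub_self, hη0]
      have hη'g : IsDiscreteGeodesic S (fun t => η (wordDist S 1 (u * c) - t))
          (wordDist S (u * c) 1) := by
        rw [s1]; exact geo_rev hSsym hSgen hηg
      have hθ0 : (fun t => u * γ (wordDist S 1 c - t)) 0 = u * c := by
        show u * γ (wordDist S 1 c - 0) = u * c
        rw [Nat.sub_zero, hγn]
      have hθn : (fun t => u * γ (wordDist S 1 c - t)) (wordDist S (u * c) u) = u := by
        show u * γ (wordDist S 1 c - wordDist S (u * c) u) = u
        rw [s2, Nat.sub_self, hγ0, mul_one]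
      have hθg : IsDiscreteGeodesic S (fun t => u * γ (wordDist S 1 c - t))
          (wordDist S (u * c) u) := by
        rw [s2]; exact geo_mul u (geo_rev hSsym hSgen hγg)
      have hk1 : wordDist S 1 (u * c) - i ≤ wordDist S (u * c) 1 := by rw [s1]; omega
      have hk2 : wordDist S 1 (u * c) - i ≤ wordDist S (u * c) u := by rw [s2]; exact hkc
      have thin3 := hhyp 1 u (u * c) _ _ hη'0 hη'n hη'g hθ0 hθn hθg
        (wordDist S 1 (u * c) - i) hk1 hk2 hk3
      have hηk : η (wordDist S 1 (u * c) - (wordDist S 1 (u * c) - i)) = η i := by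
        congr 1; omega
      rw [hηk] at thin3
      -- now thin3 : d(η i, u * γ (d1c - (d1uc - i))) ≤ δ
      -- distance between γ i and γ t where t = d1c - (d1uc - i)
      have htc : wordDist S 1 c - (wordDist S 1 (u * c) - i) ≤ wordDist S 1 c := Nat.sub_le _ _
      have hdit : wordDist S (γ i) (γ (wordDist S 1 c - (wordDist S 1 (u * c) - i)))
          ≤ wordLength S u := by
        rcases le_total i (wordDist S 1 c - (wordDist S 1 (u * c) - i)) with hle | hle
        · have := hγg i _ hle htc
          omega
        · have := hγg _ i hle hic
          have hs := d_symm hSsym hSgen (γ i)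
            (γ (wordDist S 1 c - (wordDist S 1 (u * c) - i)))
          omega
      -- the element w⁻¹ u w is short
      have hvshort : wordLength S ((γ (wordDist S 1 c - (wordDist S 1 (u * c) - i)))⁻¹ * u *
          (γ (wordDist S 1 c - (wordDist S 1 (u * c) - i)))) ≤ Bn := by
        have e : wordLength S ((γ (wordDist S 1 c - (wordDist S 1 (u * c) - i)))⁻¹ * u *
            (γ (wordDist S 1 c - (wordDist S 1 (u * c) - i)))) =
            wordDist S (γ (wordDist S 1 c - (wordDist S 1 (u * c) - i)))
              (u * γ (wordDist S 1 c - (wordDist S 1 (u * c) - i))) := by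
          unfold wordDist; rw [mul_assoc]
        have tri : wordDist S (γ (wordDist S 1 c - (wordDist S 1 (u * c) - i)))
            (u * γ (wordDist S 1 c - (wordDist S 1 (u * c) - i))) ≤
            wordDist S (γ (wordDist S 1 c - (wordDist S 1 (u * c) - i))) (γ i) +
            (wordDist S (γ i) (η i) +
             wordDist S (η i) (u * γ (wordDist S 1 c - (wordDist S 1 (u * c) - i)))) := by
          have t1 := d_triangle hSsym hSgen
            (γ (wordDist S 1 c - (wordDist S 1 (u * c) - i))) (γ i)
            (u * γ (wordDist S 1 c - (wordDist S 1 (u * c) - i)))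
          have t2 := d_triangle hSsym hSgen (γ i) (η i)
            (u * γ (wordDist S 1 c - (wordDist S 1 (u * c) - i)))
          omega
        have hs := d_symm hSsym hSgen (γ i)
          (γ (wordDist S 1 c - (wordDist S 1 (u * c) - i)))
        have hR : (wordDist S (γ (wordDist S 1 c - (wordDist S 1 (u * c) - i)))
            (u * γ (wordDist S 1 c - (wordDist S 1 (u * c) - i))) : ℝ) ≤
            (wordLength S u : ℝ) + 2 * δ := by
          have c1 : (wordDist S (γ (wordDist S 1 c - (wordDist S 1 (u * c) - i))) (γ i) : ℝ)
              ≤ (wordLength S u : ℝ) := by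
            rw [← hs]; exact_mod_cast hdit
          have c2 : (wordDist S (γ i) (η i) : ℝ) ≤ δ := thin1
          have c3 : (wordDist S (η i)
              (u * γ (wordDist S 1 c - (wordDist S 1 (u * c) - i))) : ℝ) ≤ δ := thin3
          have tri' : (wordDist S (γ (wordDist S 1 c - (wordDist S 1 (u * c) - i)))
              (u * γ (wordDist S 1 c - (wordDist S 1 (u * c) - i))) : ℝ) ≤
              (wordDist S (γ (wordDist S 1 c - (wordDist S 1 (u * c) - i))) (γ i) : ℝ) +
              ((wordDist S (γ i) (η i) : ℝ) +
               (wordDist S (η i) (u * γ (wordDist S 1 c - (wordDist S 1 (u * c) - i))) : ℝ)) := by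
            exact_mod_cast tri
          linarith
        have : (wordLength S ((γ (wordDist S 1 c - (wordDist S 1 (u * c) - i)))⁻¹ * u *
            (γ (wordDist S 1 c - (wordDist S 1 (u * c) - i)))) : ℝ) ≤ (Bn : ℝ) := by
          rw [e]; linarith
        exact_mod_cast this
      obtain ⟨m, u₂, hcm₂, hveq, hmM⟩ := hM _ hvshort
      have hstep := min_step hmin (γ (wordDist S 1 c - (wordDist S 1 (u * c) - i))) m u₂ hcm₂ hveq
      have hwc : wordDist S (γ (wordDist S 1 c - (wordDist S 1 (u * c) - i))) c =
          wordDist S 1 c - (wordDist S 1 c - (wordDist S 1 (u * c) - i)) := by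
        have := hγg (wordDist S 1 c - (wordDist S 1 (u * c) - i)) (wordDist S 1 c) htc le_rfl
        rwa [hγn] at this
      have hfin : wordLength S c ≤ M + (wordDist S 1 c -
          (wordDist S 1 c - (wordDist S 1 (u * c) - i))) := by
        have t1 : wordLength S (m * ((γ (wordDist S 1 c - (wordDist S 1 (u * c) - i)))⁻¹ * c)) ≤
            wordLength S m +
            wordLength S ((γ (wordDist S 1 c - (wordDist S 1 (u * c) - i)))⁻¹ * c) :=
          wl_mul_le hSsym hSgen _ _
        have t2 : wordLength S ((γ (wordDist S 1 c - (wordDist S 1 (u * c) - i)))⁻¹ * c) =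
            wordDist S (γ (wordDist S 1 c - (wordDist S 1 (u * c) - i))) c := rfl
        omega
      -- conclude: t ≤ M and i ≤ t + |u|
      have hiMu : i ≤ M + wordLength S u := by omega
      have : (i : ℝ) ≤ (M : ℝ) + (wordLength S u : ℝ) := by exact_mod_cast hiMu
      exact le_trans this (le_max_right _ _)
  have hgp0 := gp_nonneg hSsym hSgen c (u * c) 1
  have h1 := claim ⌊gromovProd S c (u * c) 1⌋₊ (Nat.floor_le hgp0)
  have h2 : gromovProd S c (u * c) 1 < ⌊gromovProd S c (u * c) 1⌋₊ + 1 :=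
    Nat.lt_floor_add_one _
  have hM0 : (0:ℝ) ≤ (M : ℝ) := Nat.cast_nonneg _
  have hu0 : (0:ℝ) ≤ (wordLength S u : ℝ) := Nat.cast_nonneg _
  have hmax : max (2 * δ) ((M : ℝ) + (wordLength S u : ℝ)) ≤
      (M : ℝ) + (wordLength S u : ℝ) + 2 * δ := by
    apply max_le <;> linarith
  linarith

end SmallU


/-- Let `H` be a group with finite symmetric generating set `S` whose
word metric is `δ`-hyperbolic. There is a constant `C ≥ 0`, depending only on `H`, `S`,
`δ`, such that for all `h, u, c ∈ H` with `h = c⁻¹uc`, `u` conjugacy minimal in the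
conjugacy class of `h`, and `|c|` minimal among lengths of elements conjugating `h` to a
conjugacy minimal element of its class, the concatenation of discrete geodesics from `c`
to `1`, from `1` to `u`, and from `u` to `uc` is a `(1,C)`-quasigeodesic. -/
theorem stmt5 {H : Type*} [Group H] (S : Set H) (δ : ℝ)
    (hSfin : S.Finite) (hSsym : ∀ s ∈ S, s⁻¹ ∈ S) (hSgen : Subgroup.closure S = ⊤)
    (hδ : 0 ≤ δ) (hhyp : WordHyperbolic S δ) :
    ∃ C : ℝ, 0 ≤ C ∧
      ∀ h u c : H, h = c⁻¹ * u * c → ConjMin S u →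
        (∀ c' u' : H, h = c'⁻¹ * u' * c' → ConjMin S u' →
          wordLength S c ≤ wordLength S c') →
        ∀ g₁ g₂ g₃ : ℕ → H,
          g₁ 0 = c → g₁ (wordDist S c 1) = 1 →
            IsDiscreteGeodesic S g₁ (wordDist S c 1) →
          g₂ 0 = 1 → g₂ (wordDist S 1 u) = u →
            IsDiscreteGeodesic S g₂ (wordDist S 1 u) →
          g₃ 0 = u → g₃ (wordDist S u (u * c)) = u * c →
            IsDiscreteGeodesic S g₃ (wordDist S u (u * c)) →
          ∀ p : ℕ → H,
            (∀ i : ℕ, p i =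
              if i ≤ wordDist S c 1 then g₁ i
              else if i ≤ wordDist S c 1 + wordDist S 1 u then g₂ (i - wordDist S c 1)
              else g₃ (i - wordDist S c 1 - wordDist S 1 u)) →
            ∀ i j : ℕ, i ≤ j →
              j ≤ wordDist S c 1 + wordDist S 1 u + wordDist S u (u * c) →
              (j : ℝ) - (i : ℝ) ≤ (wordDist S (p i) (p j) : ℝ) + C := by
  classical
  obtain ⟨M, hM⟩ := exists_M (H := H) hSfin hSsym hSgen ⌈5 * δ + 3⌉₊
  have hM0 : (0:ℝ) ≤ (M : ℝ) := Nat.cast_nonneg _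
  refine ⟨2 * M + 12 * δ + 10, by linarith, ?_⟩
  intro h u c hh hu hmin g₁ g₂ g₃ hg₁0 hg₁n hg₁g hg₂0 hg₂n hg₂g hg₃0 hg₃n hg₃g p hp i j hij hjtot
  have hminc : ∀ c' u' : H, c⁻¹ * u * c = c'⁻¹ * u' * c' → ConjMin S u' →
      wordLength S c ≤ wordLength S c' :=
    fun c' u' he hcm => hmin c' u' (hh.trans he) hcm
  -- symmetry normalizations
  have sc1 : wordDist S c 1 = wordDist S 1 c := d_symm hSsym hSgen _ _
  have su1 : wordDist S u 1 = wordDist S 1 u := d_symm hSsym hSgen _ _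
  have suc1 : wordDist S (u * c) 1 = wordDist S 1 (u * c) := d_symm hSsym hSgen _ _
  have e₃ : wordDist S u (u * c) = wordDist S 1 c := by
    have e : u⁻¹ * (u * c) = c := by group
    show wordLength S (u⁻¹ * (u * c)) = wordLength S (1⁻¹ * c)
    rw [e]; simp
  have en : wordDist S u (u * c) = wordDist S c 1 := e₃.trans sc1.symm
  have s2' : wordDist S (u * c) u = wordDist S 1 c := by
    have e : (u * c)⁻¹ * u = c⁻¹ := by group
    show wordLength S ((u * c)⁻¹ * u) = wordLength S (1⁻¹ * c)
    rw [e, wl_inv hSsym hSgen]; simp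
  have hdu1inv : wordDist S u⁻¹ 1 = wordDist S 1 u := by
    show wordLength S (u⁻¹⁻¹ * 1) = wordLength S (1⁻¹ * u)
    simp
  have hdcuinv : wordDist S c u⁻¹ = wordDist S 1 (u * c) := by
    have e : c⁻¹ * u⁻¹ = (u * c)⁻¹ := by group
    show wordLength S (c⁻¹ * u⁻¹) = wordLength S (1⁻¹ * (u * c))
    rw [e, wl_inv hSsym hSgen]; simp
  -- the two Gromov product bounds from minimality
  have hA := lemA hSsym hSgen hδ hhyp hu hminc
  have hAr : (wordDist S c 1 : ℝ) + (wordDist S 1 u : ℝ) - (wordDist S c u : ℝ) ≤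
      2 * δ + 2 := by
    unfold gromovProd at hA
    rw [su1] at hA
    linarith
  have hminc' : ∀ c' u' : H, c⁻¹ * u⁻¹ * c = c'⁻¹ * u' * c' → ConjMin S u' →
      wordLength S c ≤ wordLength S c' := by
    intro c' u' he hcm'
    apply hminc c' u'⁻¹ ?_ (conjMin_inv hSsym hSgen hcm')
    have e : c⁻¹ * u * c = (c⁻¹ * u⁻¹ * c)⁻¹ := by group
    rw [e, he]; group
  have hB := lemA hSsym hSgen hδ hhyp (conjMin_inv hSsym hSgen hu) hminc'
  have hBr : (wordDist S c 1 : ℝ) + (wordDist S 1 u : ℝ) - (wordDist S 1 (u * c) : ℝ) ≤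
      2 * δ + 2 := by
    unfold gromovProd at hB
    rw [hdu1inv, hdcuinv] at hB
    linarith
  -- the Gromov product (c, uc)_1 is bounded
  have hG : gromovProd S c (u * c) 1 ≤ (M : ℝ) + 5 * δ + 4 := by
    by_cases hsm : (wordLength S u : ℝ) ≤ 3 * δ + 3
    · have hBn : (wordLength S u : ℝ) + 2 * δ ≤ ((⌈5 * δ + 3⌉₊ : ℕ) : ℝ) := by
        have := Nat.le_ceil (5 * δ + 3)
        linarith
      have := lemC hSsym hSgen hδ hhyp hu hminc ⌈5 * δ + 3⌉₊ M hM hBn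
      linarith
    · push_neg at hsm
      have h4 := lem4pt hSsym hSgen hδ hhyp c u (u * c) 1
      have hwu : (wordDist S 1 u : ℝ) = (wordLength S u : ℝ) := by
        rw [d_one_left]
      have hgpuc : (2 * δ + 2 : ℝ) < gromovProd S (u * c) u 1 := by
        unfold gromovProd
        rw [suc1, su1, s2']
        have e5 : (wordDist S 1 c : ℝ) = (wordDist S c 1 : ℝ) := by
          exact_mod_cast sc1.symm
        linarith
      rcases le_total (gromovProd S c (u * c) 1) (gromovProd S (u * c) u 1) with hmm | hmm
      · rw [min_eq_left hmm] at h4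
        linarith
      · rw [min_eq_right hmm] at h4
        linarith
  have hCr : (wordDist S c 1 : ℝ) + (wordDist S 1 u : ℝ) + (wordDist S u (u * c) : ℝ) -
      (wordDist S c (u * c) : ℝ) ≤ 2 * M + 12 * δ + 10 := by
    unfold gromovProd at hG
    rw [suc1] at hG
    have en' : (wordDist S u (u * c) : ℝ) = (wordDist S c 1 : ℝ) := by
      exact_mod_cast en
    linarith
  -- case analysis
  have hpi := hp i
  have hpj := hp j
  rcases le_or_gt i (wordDist S c 1) with hi1 | hi1
  · rcases le_or_gt j (wordDist S c 1) with hj1 | hj1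
    · -- both on segment 1
      rw [hpi, if_pos hi1, hpj, if_pos hj1]
      have hD := hg₁g i j hij hj1
      rw [hD, Nat.cast_sub hij]
      linarith
    · have dpi : wordDist S c (g₁ i) = i := by
        have := hg₁g 0 i (Nat.zero_le _) hi1
        rw [hg₁0] at this; simpa using this
      rcases le_or_gt j (wordDist S c 1 + wordDist S 1 u) with hj2 | hj2
      · -- segment 1 to segment 2
        rw [hpi, if_pos hi1, hpj, if_neg (by omega), if_pos hj2]
        have dpj : wordDist S (g₂ (j - wordDist S c 1)) u =
            wordDist S 1 u - (j - wordDist S c 1) := by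
          have := hg₂g (j - wordDist S c 1) (wordDist S 1 u) (by omega) le_rfl
          rwa [hg₂n] at this
        have t1 := d_triangle hSsym hSgen c (g₁ i) u
        have t2 := d_triangle hSsym hSgen (g₁ i) (g₂ (j - wordDist S c 1)) u
        have chain : wordDist S c u + j ≤
            i + wordDist S (g₁ i) (g₂ (j - wordDist S c 1)) +
            wordDist S 1 u + wordDist S c 1 := by omega
        have chainR : (wordDist S c u : ℝ) + j ≤
            i + (wordDist S (g₁ i) (g₂ (j - wordDist S c 1)) : ℝ) +
            (wordDist S 1 u : ℝ) + (wordDist S c 1 : ℝ) := by exact_mod_cast chain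
        linarith
      · -- segment 1 to segment 3
        rw [hpi, if_pos hi1, hpj, if_neg (by omega), if_neg (by omega)]
        have dpj : wordDist S (g₃ (j - wordDist S c 1 - wordDist S 1 u)) (u * c) =
            wordDist S u (u * c) - (j - wordDist S c 1 - wordDist S 1 u) := by
          have := hg₃g (j - wordDist S c 1 - wordDist S 1 u) (wordDist S u (u * c))
            (by omega) le_rfl
          rwa [hg₃n] at this
        have t1 := d_triangle hSsym hSgen c (g₁ i) (u * c)
        have t2 := d_triangle hSsym hSgen (g₁ i)
          (g₃ (j - wordDist S c 1 - wordDist S 1 u)) (u * c)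
        have chain : wordDist S c (u * c) + j ≤
            i + wordDist S (g₁ i) (g₃ (j - wordDist S c 1 - wordDist S 1 u)) +
            wordDist S c 1 + wordDist S 1 u + wordDist S u (u * c) := by omega
        have chainR : (wordDist S c (u * c) : ℝ) + j ≤
            i + (wordDist S (g₁ i) (g₃ (j - wordDist S c 1 - wordDist S 1 u)) : ℝ) +
            (wordDist S c 1 : ℝ) + (wordDist S 1 u : ℝ) + (wordDist S u (u * c) : ℝ) := by
          exact_mod_cast chain
        linarith
  · rcases le_or_gt i (wordDist S c 1 + wordDist S 1 u) with hi2 | hi2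
    · have dpi : wordDist S 1 (g₂ (i - wordDist S c 1)) = i - wordDist S c 1 := by
        have := hg₂g 0 (i - wordDist S c 1) (Nat.zero_le _) (by omega)
        rw [hg₂0] at this; simpa using this
      rcases le_or_gt j (wordDist S c 1 + wordDist S 1 u) with hj2 | hj2
      · -- both on segment 2
        rw [hpi, if_neg (by omega), if_pos hi2, hpj, if_neg (by omega), if_pos hj2]
        have hD := hg₂g (i - wordDist S c 1) (j - wordDist S c 1) (by omega) (by omega)
        have e : j - wordDist S c 1 - (i - wordDist S c 1) = j - i := by omega
        rw [hD, e, Nat.cast_sub hij]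
        linarith
      · -- segment 2 to segment 3
        rw [hpi, if_neg (by omega), if_pos hi2, hpj, if_neg (by omega), if_neg (by omega)]
        have dpj : wordDist S (g₃ (j - wordDist S c 1 - wordDist S 1 u)) (u * c) =
            wordDist S u (u * c) - (j - wordDist S c 1 - wordDist S 1 u) := by
          have := hg₃g (j - wordDist S c 1 - wordDist S 1 u) (wordDist S u (u * c))
            (by omega) le_rfl
          rwa [hg₃n] at this
        have t1 := d_triangle hSsym hSgen 1 (g₂ (i - wordDist S c 1)) (u * c)
        have t2 := d_triangle hSsym hSgen (g₂ (i - wordDist S c 1))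
          (g₃ (j - wordDist S c 1 - wordDist S 1 u)) (u * c)
        have chain : wordDist S 1 (u * c) + j ≤
            i + wordDist S (g₂ (i - wordDist S c 1))
              (g₃ (j - wordDist S c 1 - wordDist S 1 u)) +
            wordDist S 1 u + wordDist S u (u * c) := by omega
        have chainR : (wordDist S 1 (u * c) : ℝ) + j ≤
            i + (wordDist S (g₂ (i - wordDist S c 1))
              (g₃ (j - wordDist S c 1 - wordDist S 1 u)) : ℝ) +
            (wordDist S 1 u : ℝ) + (wordDist S u (u * c) : ℝ) := by exact_mod_cast chain
        have en' : (wordDist S u (u * c) : ℝ) = (wordDist S c 1 : ℝ) := by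
          exact_mod_cast en
        linarith
    · -- both on segment 3
      rw [hpi, if_neg (by omega), if_neg (by omega), hpj, if_neg (by omega), if_neg (by omega)]
      have hD := hg₃g (i - wordDist S c 1 - wordDist S 1 u)
        (j - wordDist S c 1 - wordDist S 1 u) (by omega) (by omega)
      have e : j - wordDist S c 1 - wordDist S 1 u -
          (i - wordDist S c 1 - wordDist S 1 u) = j - i := by omega
      rw [hD, e, Nat.cast_sub hij]
      linarith
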